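/- Let (Q, S, μ) be a fuzzy skill multimap and (Q, 𝒦) the delineated knowledge structure. Assume that for every q ∈ Q and every C ∈ μ(q) there is a designated competency M_{q,C} ∈ μ(q) with M_{q,C} ⊆ C which is a minimal element of μ(q) (no D ∈ μ(q) satisfies D ⊆ M_{q,C} and D ≠ M_{q,C}). Then the following are equivalent: (1) (Q, 𝒦) is discriminative; (2) for any pair of distinct items q, r ∈ Q, either there exists C ∈ μ(q) with M_{q,C} ≠ M_{r,D} for every D ∈ μ(r), or there exists D ∈ μ(r) with M_{r,D} ≠ M_{q,C} for every C ∈ μ(q); (3) for any pair of distinct items q, r ∈ Q, either there exists C ∈ μ(q) with M_{q,C} ⋠ {M_{r,D} : D ∈ μ(r)}, or there exists D ∈ μ(r) with M_{r,D} ⋠ {M_{q,C} : C ∈ μ(q)}. -/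
import Mathlib


/-- A fuzzy set on a set `S` of skills: a function `S → [0,1]`, ordered pointwise. -/
abbrev FuzzySet (S : Type*) := S → unitInterval

/-- The problem function induced by a fuzzy skill multimap `μ`:
`p(F) = {q | ∃ C ∈ μ(q), C ⊆ F}`. -/
def pfun {Q S : Type*} (μ : Q → Set (FuzzySet S)) (F : FuzzySet S) : Set Q :=
  {q | ∃ C ∈ μ q, C ≤ F}

/-- The knowledge structure delineated by a fuzzy skill multimap `μ`. -/
def delineated {Q S : Type*} (μ : Q → Set (FuzzySet S)) : Set (Set Q) :=
  Set.range (pfun μ)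

/-- `𝒦_q = {K ∈ 𝒦 | q ∈ K}`. -/
def Kq {Q : Type*} (𝒦 : Set (Set Q)) (q : Q) : Set (Set Q) := {K ∈ 𝒦 | q ∈ K}

/-- A knowledge structure is discriminative if `𝒦_q ≠ 𝒦_r` for distinct `q, r`. -/
def Discriminative {Q : Type*} (𝒦 : Set (Set Q)) : Prop :=
  ∀ q r : Q, q ≠ r → Kq 𝒦 q ≠ Kq 𝒦 r

/-- A knowledge structure is bi-discriminative if `𝒦_q ⊄ 𝒦_r` and `𝒦_r ⊄ 𝒦_q`
for distinct `q, r`. -/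
def BiDiscriminative {Q : Type*} (𝒦 : Set (Set Q)) : Prop :=
  ∀ q r : Q, q ≠ r → ¬ Kq 𝒦 q ⊆ Kq 𝒦 r ∧ ¬ Kq 𝒦 r ⊆ Kq 𝒦 q

/-- `μ` is a fuzzy skill multimap: each `μ(q)` is a nonempty family of nonzero fuzzy sets. -/
def FSM {Q S : Type*} (μ : Q → Set (FuzzySet S)) : Prop :=
  ∀ q, (μ q).Nonempty ∧ ∀ C ∈ μ q, C ≠ 0

/-- A molecule: a fuzzy set with exactly one skill of nonzero membership. -/
def Molecule {S : Type*} (T : FuzzySet S) : Prop := ∃! s, T s ≠ 0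

/-- A knowledge space: a knowledge structure closed under unions of arbitrary subfamilies. -/
def IsKSpace {Q : Type*} (𝒦 : Set (Set Q)) : Prop :=
  ∅ ∈ 𝒦 ∧ Set.univ ∈ 𝒦 ∧ ∀ 𝒮 ⊆ 𝒦, ⋃₀ 𝒮 ∈ 𝒦

/-- With a designated minimal competency `M q C ∈ μ(q)` below each
`C ∈ μ(q)`, discriminativity of the delineated structure is equivalent to each of the
two conditions (2) and (3). -/
theorem stmt_11 {Q S : Type*} [Nonempty Q] [Nonempty S]
    (μ : Q → Set (FuzzySet S)) (hFSM : FSM μ)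
    (M : Q → FuzzySet S → FuzzySet S)
    (hM : ∀ q, ∀ C ∈ μ q, M q C ∈ μ q ∧ M q C ≤ C ∧
      ∀ D ∈ μ q, D ≤ M q C → D = M q C) :
    (Discriminative (delineated μ) ↔
      ∀ q r : Q, q ≠ r →
        (∃ C ∈ μ q, ∀ D ∈ μ r, M q C ≠ M r D) ∨
        (∃ D ∈ μ r, ∀ C ∈ μ q, M r D ≠ M q C)) ∧
    (Discriminative (delineated μ) ↔
      ∀ q r : Q, q ≠ r →
        (∃ C ∈ μ q, ¬ ∃ D ∈ μ r, M r D ≤ M q C) ∨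
        (∃ D ∈ μ r, ¬ ∃ C ∈ μ q, M q C ≤ M r D)) := by
  -- membership in p(F) via minimal competencies
  have memp : ∀ (q : Q) (F : FuzzySet S), q ∈ pfun μ F ↔ ∃ C ∈ μ q, M q C ≤ F := by
    intro q F
    constructor
    · rintro ⟨C, hC, hle⟩
      exact ⟨C, hC, (hM q C hC).2.1.trans hle⟩
    · rintro ⟨C, hC, hle⟩
      exact ⟨M q C, (hM q C hC).1, hle⟩
  -- Kq equality characterization
  have key : ∀ q r : Q, Kq (delineated μ) q = Kq (delineated μ) r ↔
      ∀ F : FuzzySet S, (q ∈ pfun μ F ↔ r ∈ pfun μ F) := by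
    intro q r
    constructor
    · intro h F
      constructor
      · intro hq
        have : pfun μ F ∈ Kq (delineated μ) q := ⟨⟨F, rfl⟩, hq⟩
        rw [h] at this; exact this.2
      · intro hr
        have : pfun μ F ∈ Kq (delineated μ) r := ⟨⟨F, rfl⟩, hr⟩
        rw [← h] at this; exact this.2
    · intro h
      ext K
      constructor
      · rintro ⟨⟨F, rfl⟩, hq⟩
        exact ⟨⟨F, rfl⟩, (h F).1 hq⟩
      · rintro ⟨⟨F, rfl⟩, hr⟩
        exact ⟨⟨F, rfl⟩, (h F).2 hr⟩
  -- Disc → (2)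
  have d2 : Discriminative (delineated μ) →
      ∀ q r : Q, q ≠ r →
        (∃ C ∈ μ q, ∀ D ∈ μ r, M q C ≠ M r D) ∨
        (∃ D ∈ μ r, ∀ C ∈ μ q, M r D ≠ M q C) := by
    intro hD q r hqr
    by_contra hcon
    push_neg at hcon
    obtain ⟨h1, h2⟩ := hcon
    apply hD q r hqr
    rw [key]
    intro F
    rw [memp, memp]
    constructor
    · rintro ⟨C, hC, hle⟩
      obtain ⟨D, hD', heq⟩ := h1 C hC
      exact ⟨D, hD', heq ▸ hle⟩
    · rintro ⟨D, hD', hle⟩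
      obtain ⟨C, hC, heq⟩ := h2 D hD'
      exact ⟨C, hC, heq ▸ hle⟩
  -- (2) → (3)
  have c23 : (∀ q r : Q, q ≠ r →
        (∃ C ∈ μ q, ∀ D ∈ μ r, M q C ≠ M r D) ∨
        (∃ D ∈ μ r, ∀ C ∈ μ q, M r D ≠ M q C)) →
      ∀ q r : Q, q ≠ r →
        (∃ C ∈ μ q, ¬ ∃ D ∈ μ r, M r D ≤ M q C) ∨
        (∃ D ∈ μ r, ¬ ∃ C ∈ μ q, M q C ≤ M r D) := by
    intro h2 q r hqr
    by_contra hcon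
    push_neg at hcon
    obtain ⟨h1, h2'⟩ := hcon
    -- show: for every C ∈ μ q, ∃ D ∈ μ r, M q C = M r D
    have equal1 : ∀ C ∈ μ q, ∃ D ∈ μ r, M q C = M r D := by
      intro C hC
      obtain ⟨D, hD', hle⟩ := h1 C hC
      obtain ⟨C', hC', hle'⟩ := h2' D hD'
      have hle'' : M q C' ≤ M q C := hle'.trans hle
      have heq : M q C' = M q C :=
        (hM q C hC).2.2 (M q C') (hM q C' hC').1 hle''
      refine ⟨D, hD', le_antisymm ?_ hle⟩
      rw [← heq]; exact hle'
    have equal2 : ∀ D ∈ μ r, ∃ C ∈ μ q, M r D = M q C := by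
      intro D hD'
      obtain ⟨C, hC, hle⟩ := h2' D hD'
      obtain ⟨D', hD'', hle'⟩ := h1 C hC
      have hle'' : M r D' ≤ M r D := hle'.trans hle
      have heq : M r D' = M r D :=
        (hM r D hD').2.2 (M r D') (hM r D' hD'').1 hle''
      refine ⟨C, hC, le_antisymm ?_ hle⟩
      rw [← heq]; exact hle'
    rcases h2 q r hqr with ⟨C, hC, hne⟩ | ⟨D, hD', hne⟩
    · obtain ⟨D, hD', heq⟩ := equal1 C hC
      exact hne D hD' heq
    · obtain ⟨C, hC, heq⟩ := equal2 D hD'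
      exact hne C hC heq
  -- (3) → Disc
  have c3d : (∀ q r : Q, q ≠ r →
        (∃ C ∈ μ q, ¬ ∃ D ∈ μ r, M r D ≤ M q C) ∨
        (∃ D ∈ μ r, ¬ ∃ C ∈ μ q, M q C ≤ M r D)) →
      Discriminative (delineated μ) := by
    intro h3 q r hqr heq
    have hsep : ∀ a b : Q, (∃ C ∈ μ a, ¬ ∃ D ∈ μ b, M b D ≤ M a C) →
        Kq (delineated μ) a = Kq (delineated μ) b → False := by
      intro a b ⟨C, hC, hno⟩ heq'
      have := ((key a b).1 heq' (M a C)).1 ((memp a (M a C)).2 ⟨C, hC, le_rfl⟩)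
      obtain ⟨D, hD', hle⟩ := (memp b (M a C)).1 this
      exact hno ⟨D, hD', hle⟩
    rcases h3 q r hqr with h | h
    · exact hsep q r h heq
    · exact hsep r q h heq.symm
  exact ⟨⟨d2, fun h => c3d (c23 h)⟩, ⟨fun h => c23 (d2 h), c3d⟩⟩
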